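/- arXiv:2509.17900 — 4 statements merged into one kernel-verified Lean document; each statement's English description precedes it below -/
import Mathlib

section
/- The quotient of B_3(d) by the central subgroup generated by Δ² = (σ₁σ₂)³ is isomorphic to the von Dyck (orientation-preserving triangle) group Δ(2,3,d) = ⟨a, b | a² = b³ = (ab)^d = 1⟩. -/
/-- The relations of the truncated braid group
`B₃(d) = ⟨σ₁, σ₂ | σ₁σ₂σ₁ = σ₂σ₁σ₂, σ₁^d = σ₂^d = 1⟩`. -/
def truncatedBraid3Rels (d : ℕ) : Set (FreeGroup (Fin 2)) :=
  {FreeGroup.of 0 * FreeGroup.of 1 * FreeGroup.of 0 *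
      (FreeGroup.of 1 * FreeGroup.of 0 * FreeGroup.of 1)⁻¹,
   FreeGroup.of 0 ^ d, FreeGroup.of 1 ^ d}

/-- The truncated braid group `B₃(d)`. -/
def TruncatedBraid3 (d : ℕ) : Type := PresentedGroup (truncatedBraid3Rels d)

instance (d : ℕ) : Group (TruncatedBraid3 d) := inferInstanceAs (Group (PresentedGroup _))

/-- The generator `σ₁` of `B₃(d)`. -/
def TruncatedBraid3.σ₁ (d : ℕ) : TruncatedBraid3 d := PresentedGroup.of 0

/-- The generator `σ₂` of `B₃(d)`. -/
def TruncatedBraid3.σ₂ (d : ℕ) : TruncatedBraid3 d := PresentedGroup.of 1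

/-- The full twist `Δ² = (σ₁σ₂)³` in `B₃(d)`. -/
def TruncatedBraid3.fullTwist (d : ℕ) : TruncatedBraid3 d :=
  (TruncatedBraid3.σ₁ d * TruncatedBraid3.σ₂ d) ^ 3

/-- The von Dyck (orientation-preserving triangle) group
`Δ(2,3,d) = ⟨a, b | a² = b³ = (ab)^d = 1⟩`. -/
def VonDyck (d : ℕ) : Type :=
  PresentedGroup ({FreeGroup.of 0 ^ 2, FreeGroup.of 1 ^ 3,
    (FreeGroup.of 0 * FreeGroup.of 1) ^ d} : Set (FreeGroup (Fin 2)))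

instance (d : ℕ) : Group (VonDyck d) := inferInstanceAs (Group (PresentedGroup _))

/- ### Auxiliary material -/

lemma pg_rel_one {α : Type*} {rels : Set (FreeGroup α)} {r : FreeGroup α} (hr : r ∈ rels) :
    PresentedGroup.mk rels r = 1 :=
  (QuotientGroup.eq_one_iff _).mpr (Subgroup.subset_normalClosure hr)

namespace TruncatedBraid3

variable {d : ℕ}

lemma braid : σ₁ d * σ₂ d * σ₁ d = σ₂ d * σ₁ d * σ₂ d := by
  have h := pg_rel_one (rels := truncatedBraid3Rels d)
    (r := FreeGroup.of 0 * FreeGroup.of 1 * FreeGroup.of 0 *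
      (FreeGroup.of 1 * FreeGroup.of 0 * FreeGroup.of 1)⁻¹) (Set.mem_insert _ _)
  simp only [map_mul, map_inv] at h
  exact mul_inv_eq_one.mp h

lemma sigma1_pow : σ₁ d ^ d = 1 := by
  have h := pg_rel_one (rels := truncatedBraid3Rels d) (r := FreeGroup.of 0 ^ d)
    (by simp [truncatedBraid3Rels])
  simp only [map_pow] at h
  exact h

lemma sigma2_pow : σ₂ d ^ d = 1 := by
  have h := pg_rel_one (rels := truncatedBraid3Rels d) (r := FreeGroup.of 1 ^ d)
    (by simp [truncatedBraid3Rels])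
  simp only [map_pow] at h
  exact h

lemma delta_sq : (σ₁ d * σ₂ d * σ₁ d) ^ 2 = fullTwist d := by
  rw [sq]
  nth_rewrite 2 [braid]
  rw [fullTwist]
  simp [pow_succ, mul_assoc]

lemma delta_mul_sigma2 : (σ₁ d * σ₂ d * σ₁ d) * σ₂ d = σ₁ d * (σ₁ d * σ₂ d * σ₁ d) := by
  nth_rewrite 2 [braid]
  group

lemma delta_mul_sigma1 : (σ₁ d * σ₂ d * σ₁ d) * σ₁ d = σ₂ d * (σ₁ d * σ₂ d * σ₁ d) := by
  nth_rewrite 1 [braid]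
  group

lemma fullTwist_mem_center : fullTwist d ∈ Subgroup.center (TruncatedBraid3 d) := by
  rw [Subgroup.mem_center_iff]
  intro g
  refine (Subgroup.mem_centralizer_iff.mp
    (PresentedGroup.generated_by _ (Subgroup.centralizer {fullTwist d}) (fun j => ?_) g)
    (fullTwist d) rfl).symm
  rw [Subgroup.mem_centralizer_iff]
  rintro h rfl
  have h1 : (σ₁ d * σ₂ d * σ₁ d) ^ 2 * σ₁ d = σ₁ d * (σ₁ d * σ₂ d * σ₁ d) ^ 2 := by
    rw [pow_two, mul_assoc (σ₁ d * σ₂ d * σ₁ d), delta_mul_sigma1, ← mul_assoc,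
      delta_mul_sigma2, mul_assoc]
  have h2 : (σ₁ d * σ₂ d * σ₁ d) ^ 2 * σ₂ d = σ₂ d * (σ₁ d * σ₂ d * σ₁ d) ^ 2 := by
    rw [pow_two, mul_assoc (σ₁ d * σ₂ d * σ₁ d), delta_mul_sigma2, ← mul_assoc,
      delta_mul_sigma1, mul_assoc]
  rw [← delta_sq]
  fin_cases j
  · exact h1
  · exact h2

end TruncatedBraid3

section Iso

open TruncatedBraid3

variable (d : ℕ)

/-- The quotient of `B₃(d)` by the full twist. -/
abbrev QB3 := TruncatedBraid3 d ⧸ Subgroup.normalClosure {TruncatedBraid3.fullTwist d}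

def π3 : TruncatedBraid3 d →* QB3 d := QuotientGroup.mk' _

lemma pi_fullTwist_eq_one : π3 d (fullTwist d) = 1 :=
  (QuotientGroup.eq_one_iff _).mpr (Subgroup.subset_normalClosure rfl)

/-- Generators of the von Dyck group. -/
def VA : VonDyck d := PresentedGroup.of 0
def VB : VonDyck d := PresentedGroup.of 1

lemma VA_sq : VA d ^ 2 = 1 := by
  have h := pg_rel_one (rels := ({FreeGroup.of 0 ^ 2, FreeGroup.of 1 ^ 3,
    (FreeGroup.of 0 * FreeGroup.of 1) ^ d} : Set (FreeGroup (Fin 2))))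
    (r := FreeGroup.of 0 ^ 2) (by simp)
  simp only [map_pow] at h
  exact h

lemma VB_cube : VB d ^ 3 = 1 := by
  have h := pg_rel_one (rels := ({FreeGroup.of 0 ^ 2, FreeGroup.of 1 ^ 3,
    (FreeGroup.of 0 * FreeGroup.of 1) ^ d} : Set (FreeGroup (Fin 2))))
    (r := FreeGroup.of 1 ^ 3) (by simp)
  simp only [map_pow] at h
  exact h

lemma VAB_pow : (VA d * VB d) ^ d = 1 := by
  have h := pg_rel_one (rels := ({FreeGroup.of 0 ^ 2, FreeGroup.of 1 ^ 3,
    (FreeGroup.of 0 * FreeGroup.of 1) ^ d} : Set (FreeGroup (Fin 2))))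
    (r := (FreeGroup.of 0 * FreeGroup.of 1) ^ d) (by simp)
  simp only [map_pow, map_mul] at h
  exact h

/-- The map `VonDyck d →* QB3 d`, sending `a ↦ σ₁σ₂σ₁`, `b ↦ (σ₁σ₂)⁻¹`. -/
noncomputable def phi : VonDyck d →* QB3 d := by
  refine PresentedGroup.toGroup
    (f := ![π3 d (σ₁ d * σ₂ d * σ₁ d), (π3 d (σ₁ d * σ₂ d))⁻¹]) ?_
  intro r hr
  simp only [Set.mem_insert_iff, Set.mem_singleton_iff] at hr
  rcases hr with rfl | rfl | rfl
  · simp only [map_pow, FreeGroup.lift_apply_of, Matrix.cons_val_zero]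
    rw [← map_pow, delta_sq, pi_fullTwist_eq_one]
  · simp only [map_pow, FreeGroup.lift_apply_of, Matrix.cons_val_one, Matrix.head_cons,
      Matrix.cons_val_zero]
    rw [inv_pow, inv_eq_one, ← map_pow, show (σ₁ d * σ₂ d) ^ 3 = fullTwist d from rfl,
      pi_fullTwist_eq_one]
  · simp only [map_pow, map_mul, FreeGroup.lift_apply_of, Matrix.cons_val_zero, Matrix.cons_val_one,
      Matrix.head_cons]
    rw [conj_pow, ← map_pow, sigma1_pow, map_one, mul_one, mul_inv_cancel]

/-- The map `TruncatedBraid3 d →* VonDyck d`, sending `σ₁ ↦ ba`, `σ₂ ↦ a⁻¹b⁻²`. -/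
noncomputable def psi0 : TruncatedBraid3 d →* VonDyck d := by
  refine PresentedGroup.toGroup
    (f := ![VB d * VA d, (VA d)⁻¹ * ((VB d)⁻¹ * (VB d)⁻¹)]) ?_
  have ha := VA_sq d
  have hb := VB_cube d
  have hab := VAB_pow d
  have ha' : (VA d)⁻¹ = VA d := by
    rw [inv_eq_iff_mul_eq_one, ← pow_two]; exact ha
  have hb' : (VB d)⁻¹ * (VB d)⁻¹ = VB d := by
    rw [← mul_inv_rev, inv_eq_iff_mul_eq_one,
      show VB d * VB d * VB d = VB d ^ 3 by rw [pow_succ, pow_two], hb]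
  intro r hr
  simp only [truncatedBraid3Rels, Set.mem_insert_iff, Set.mem_singleton_iff] at hr
  rcases hr with rfl | rfl | rfl
  · simp only [map_mul, map_inv, FreeGroup.lift_apply_of, Matrix.cons_val_zero, Matrix.cons_val_one,
      Matrix.head_cons]
    rw [mul_inv_eq_one]
    have e1 : VB d * VA d * ((VA d)⁻¹ * ((VB d)⁻¹ * (VB d)⁻¹)) * (VB d * VA d) = VA d := by
      group
    have e2 : (VA d)⁻¹ * ((VB d)⁻¹ * (VB d)⁻¹) * (VB d * VA d) *
        ((VA d)⁻¹ * ((VB d)⁻¹ * (VB d)⁻¹)) = (VA d)⁻¹ * (VB d ^ 3)⁻¹ := by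
      group
    rw [e1, e2, hb, inv_one, mul_one]
    exact ha'.symm
  · simp only [map_pow, map_mul, FreeGroup.lift_apply_of, Matrix.cons_val_zero]
    have : VB d * VA d = (VA d)⁻¹ * (VA d * VB d) * ((VA d)⁻¹)⁻¹ := by group
    rw [this, conj_pow, hab, mul_one, inv_inv, inv_mul_cancel]
  · simp only [map_pow, map_mul, map_inv, FreeGroup.lift_apply_of, Matrix.cons_val_one,
      Matrix.head_cons]
    rw [hb', ha']
    exact hab

lemma psi0_fullTwist : psi0 d (fullTwist d) = 1 := by
  have h1 : psi0 d (σ₁ d) = VB d * VA d := by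
    exact
      (PresentedGroup.toGroup.of (x := (0 : Fin 2)) _)
  have h2 : psi0 d (σ₂ d) = (VA d)⁻¹ * ((VB d)⁻¹ * (VB d)⁻¹) := by
    exact
      (PresentedGroup.toGroup.of (x := (1 : Fin 2)) _)
  rw [fullTwist, map_pow, map_mul, h1, h2]
  have : VB d * VA d * ((VA d)⁻¹ * ((VB d)⁻¹ * (VB d)⁻¹)) = (VB d)⁻¹ := by group
  rw [this, inv_pow, inv_eq_one, VB_cube]

noncomputable def psi : QB3 d →* VonDyck d :=
  QuotientGroup.lift _ (psi0 d) (by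
    intro x hx
    refine Subgroup.normalClosure_le_normal (N := (psi0 d).ker) ?_ hx
    rintro y rfl
    exact psi0_fullTwist d)

end Iso

/-- The quotient of `B₃(d)` by the (central, hence normal) subgroup generated by
`Δ² = (σ₁σ₂)³` is isomorphic to the von Dyck group `Δ(2,3,d)`.  Since `Δ²` is
central, the subgroup it generates agrees with its normal closure. -/
theorem truncatedBraid3_quotient_fullTwist_iso_vonDyck (d : ℕ) (hd : 2 ≤ d) :
    Subgroup.normalClosure {TruncatedBraid3.fullTwist d} =
      Subgroup.closure {TruncatedBraid3.fullTwist d} ∧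
    Nonempty ((TruncatedBraid3 d ⧸ Subgroup.normalClosure {TruncatedBraid3.fullTwist d}) ≃*
      VonDyck d) := by
  constructor
  · have hle : Subgroup.closure {TruncatedBraid3.fullTwist d} ≤
        Subgroup.center (TruncatedBraid3 d) :=
      (Subgroup.closure_le _).mpr (by
        rintro x rfl
        exact TruncatedBraid3.fullTwist_mem_center)
    have hnormal : (Subgroup.closure {TruncatedBraid3.fullTwist d}).Normal := by
      constructor
      intro n hn g
      have hc := Subgroup.mem_center_iff.mp (hle hn) g
      rw [hc, mul_assoc, mul_inv_cancel, mul_one]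
      exact hn
    exact le_antisymm (Subgroup.normalClosure_le_normal Subgroup.subset_closure)
      Subgroup.closure_le_normalClosure
  · refine ⟨MonoidHom.toMulEquiv (psi d) (phi d) ?_ ?_⟩
    · -- phi ∘ psi = id on QB3
      apply QuotientGroup.monoidHom_ext
      apply PresentedGroup.ext
      intro x
      have h1 : psi0 d (TruncatedBraid3.σ₁ d) = VB d * VA d :=
        PresentedGroup.toGroup.of _
      have h2 : psi0 d (TruncatedBraid3.σ₂ d) = (VA d)⁻¹ * ((VB d)⁻¹ * (VB d)⁻¹) :=
        PresentedGroup.toGroup.of _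
      have hpa : phi d (VA d) = π3 d (TruncatedBraid3.σ₁ d * TruncatedBraid3.σ₂ d *
          TruncatedBraid3.σ₁ d) := PresentedGroup.toGroup.of _
      have hpb : phi d (VB d) = (π3 d (TruncatedBraid3.σ₁ d * TruncatedBraid3.σ₂ d))⁻¹ :=
        PresentedGroup.toGroup.of _
      fin_cases x
      · show phi d (psi d (π3 d (TruncatedBraid3.σ₁ d))) = π3 d (TruncatedBraid3.σ₁ d)
        have : psi d (π3 d (TruncatedBraid3.σ₁ d)) = psi0 d (TruncatedBraid3.σ₁ d) := rfl
        rw [this, h1, map_mul, hpa, hpb, ← map_inv, ← map_mul]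
        exact congrArg (π3 d) (by group)
      · show phi d (psi d (π3 d (TruncatedBraid3.σ₂ d))) = π3 d (TruncatedBraid3.σ₂ d)
        have : psi d (π3 d (TruncatedBraid3.σ₂ d)) = psi0 d (TruncatedBraid3.σ₂ d) := rfl
        rw [this, h2]
        simp only [map_mul, map_inv]
        rw [hpa, hpb, inv_inv, ← map_inv, ← map_mul, ← map_mul]
        exact congrArg (π3 d) (by group)
    · -- psi ∘ phi = id on VonDyck
      apply PresentedGroup.ext
      intro x
      have h1 : psi0 d (TruncatedBraid3.σ₁ d) = VB d * VA d :=
        PresentedGroup.toGroup.of _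
      have h2 : psi0 d (TruncatedBraid3.σ₂ d) = (VA d)⁻¹ * ((VB d)⁻¹ * (VB d)⁻¹) :=
        PresentedGroup.toGroup.of _
      have hpa : phi d (VA d) = π3 d (TruncatedBraid3.σ₁ d * TruncatedBraid3.σ₂ d *
          TruncatedBraid3.σ₁ d) := PresentedGroup.toGroup.of _
      have hpb : phi d (VB d) = (π3 d (TruncatedBraid3.σ₁ d * TruncatedBraid3.σ₂ d))⁻¹ :=
        PresentedGroup.toGroup.of _
      have hq : ∀ g : TruncatedBraid3 d, psi d (π3 d g) = psi0 d g := fun _ => rfl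
      fin_cases x
      · show psi d (phi d (VA d)) = VA d
        rw [hpa, hq, map_mul, map_mul, h1, h2]
        group
      · show psi d (phi d (VB d)) = VB d
        rw [hpb, map_inv, hq, map_mul, h1, h2]
        group
end

section
/- The truncated braid group B_3(3) = ⟨σ₁, σ₂ | σ₁σ₂σ₁ = σ₂σ₁σ₂, σ₁³ = σ₂³ = 1⟩ has order 24. -/
namespace TB3Aux

/-- `σ₁` in `B₃(3)`. -/
def a : TruncatedBraid3 3 := TruncatedBraid3.σ₁ 3

/-- `σ₂` in `B₃(3)`. -/
def b : TruncatedBraid3 3 := TruncatedBraid3.σ₂ 3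

lemma rel_one {r : FreeGroup (Fin 2)} (hr : r ∈ truncatedBraid3Rels 3) :
    PresentedGroup.mk (truncatedBraid3Rels 3) r = 1 :=
  (QuotientGroup.eq_one_iff r).2 (Subgroup.subset_normalClosure hr)

lemma hbraid : a * b * a = b * a * b := by
  have h := rel_one (show FreeGroup.of 0 * FreeGroup.of 1 * FreeGroup.of 0 *
      (FreeGroup.of 1 * FreeGroup.of 0 * FreeGroup.of 1)⁻¹ ∈ truncatedBraid3Rels 3 from
    Set.mem_insert _ _)
  rw [map_mul, map_inv, mul_inv_eq_one] at h
  exact h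

lemma ha : a * a * a = 1 := by
  have h := rel_one (show FreeGroup.of 0 ^ 3 ∈ truncatedBraid3Rels 3 by
    right; left; rfl)
  rw [map_pow] at h
  calc a * a * a = (PresentedGroup.mk (truncatedBraid3Rels 3) (FreeGroup.of 0)) ^ 3 := by
        exact (pow_three' _).symm
    _ = 1 := h

lemma hb : b * b * b = 1 := by
  have h := rel_one (show FreeGroup.of 1 ^ 3 ∈ truncatedBraid3Rels 3 by
    right; right; rfl)
  rw [map_pow] at h
  calc b * b * b = (PresentedGroup.mk (truncatedBraid3Rels 3) (FreeGroup.of 1)) ^ 3 := by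
        exact (pow_three' _).symm
    _ = 1 := h

/- rewriting rules (a confluent system for the group), right-associated -/

lemma ra1 (x : TruncatedBraid3 3) : a * (a * (a * x)) = x := by
  rw [← mul_assoc, ← mul_assoc, ha, one_mul]

lemma rb1 (x : TruncatedBraid3 3) : b * (b * (b * x)) = x := by
  rw [← mul_assoc, ← mul_assoc, hb, one_mul]

lemma ra0 : a * (a * a) = 1 := by simpa only [mul_one] using ra1 1

lemma rb0 : b * (b * b) = 1 := by simpa only [mul_one] using rb1 1

lemma rab1 (x : TruncatedBraid3 3) : b * (a * (b * x)) = a * (b * (a * x)) := by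
  simp only [← mul_assoc]
  rw [← hbraid]

lemma rab0 : b * (a * b) = a * (b * a) := by simpa only [mul_one] using rab1 1

lemma r41 (x : TruncatedBraid3 3) :
    b * (a * (a * (b * (a * x)))) = a * (b * (a * (a * (b * x)))) := by
  calc b * (a * (a * (b * (a * x))))
      = b * (a * (b * (a * (b * x)))) := by rw [← rab1 x]
    _ = a * (b * (a * (a * (b * x)))) := rab1 (a * (b * x))

lemma r40 : b * (a * (a * (b * a))) = a * (b * (a * (a * b))) := by
  simpa only [mul_one] using r41 1

lemma r51 (x : TruncatedBraid3 3) :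
    b * (a * (a * (b * (b * x)))) = a * (a * (b * (b * (a * x)))) := by
  calc b * (a * (a * (b * (b * x))))
      = a * (a * (a * (b * (a * (a * (b * (b * x))))))) := (ra1 _).symm
    _ = a * (a * (b * (a * (b * (a * (b * (b * x))))))) := by
        rw [← rab1 (a * (b * (b * x)))]
    _ = a * (a * (b * (b * (a * (b * (b * (b * x))))))) := by
        rw [← rab1 (b * (b * x))]
    _ = a * (a * (b * (b * (a * x)))) := by rw [rb1 x]

lemma r50 : b * (a * (a * (b * b))) = a * (a * (b * (b * a))) := by
  simpa only [mul_one] using r51 1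

lemma r61 (x : TruncatedBraid3 3) :
    b * (b * (a * (a * (b * x)))) = a * (b * (b * (a * (a * x)))) := by
  calc b * (b * (a * (a * (b * x))))
      = b * (b * (a * (a * (b * (a * (a * (a * x))))))) := by rw [ra1 x]
    _ = b * (b * (a * (b * (a * (b * (a * (a * x))))))) := by
        rw [← rab1 (a * (a * x))]
    _ = b * (b * (b * (a * (b * (b * (a * (a * x))))))) := by
        rw [← rab1 (b * (a * (a * x)))]
    _ = a * (b * (b * (a * (a * x)))) := rb1 _

lemma r60 : b * (b * (a * (a * b))) = a * (b * (b * (a * a))) := by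
  simpa only [mul_one] using r61 1

/-- The list of the 24 normal forms. -/
def L : List (TruncatedBraid3 3) :=
  [1, a, b, a * a, b * a, a * b, b * b, b * (a * a), a * (b * a), b * (b * a), a * (a * b),
   a * (b * b), a * (b * (a * a)), b * (b * (a * a)), a * (a * (b * a)), a * (b * (b * a)),
   b * (a * (a * b)), a * (a * (b * b)), a * (a * (b * (a * a))), a * (b * (b * (a * a))),
   a * (b * (a * (a * b))), a * (a * (b * (b * a))), a * (a * (b * (a * (a * b)))),
   a * (a * (b * (b * (a * a))))]

lemma step_a : ∀ y ∈ L, a * y ∈ L := by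
  intro y hy
  simp only [L, List.mem_cons, List.not_mem_nil, or_false] at hy
  rcases hy with rfl | rfl | rfl | rfl | rfl | rfl | rfl | rfl | rfl | rfl | rfl | rfl | rfl |
    rfl | rfl | rfl | rfl | rfl | rfl | rfl | rfl | rfl | rfl | rfl <;>
  simp only [ra1, ra0, rb1, rb0, rab1, rab0, r41, r40, r51, r50, r61, r60, mul_one, L,
    List.mem_cons, List.not_mem_nil, or_false, eq_self_iff_true, true_or, or_true]

lemma step_b : ∀ y ∈ L, b * y ∈ L := by
  intro y hy
  simp only [L, List.mem_cons, List.not_mem_nil, or_false] at hy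
  rcases hy with rfl | rfl | rfl | rfl | rfl | rfl | rfl | rfl | rfl | rfl | rfl | rfl | rfl |
    rfl | rfl | rfl | rfl | rfl | rfl | rfl | rfl | rfl | rfl | rfl <;>
  simp only [ra1, ra0, rb1, rb0, rab1, rab0, r41, r40, r51, r50, r61, r60, mul_one, L,
    List.mem_cons, List.not_mem_nil, or_false, eq_self_iff_true, true_or, or_true]

lemma one_mem_L : (1 : TruncatedBraid3 3) ∈ L := by
  simp [L]

lemma ha_inv : a⁻¹ = a * a := inv_eq_of_mul_eq_one_right ra0

lemma hb_inv : b⁻¹ = b * b := inv_eq_of_mul_eq_one_right rb0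

lemma cover : ∀ g : TruncatedBraid3 3, g ∈ L := by
  intro g
  set S : Set (TruncatedBraid3 3) :=
    Set.range (PresentedGroup.of : Fin 2 → TruncatedBraid3 3) with hS
  have h1 : g ∈ Subgroup.closure S := by
    rw [hS]; exact (Subgroup.eq_top_iff' _).mp (PresentedGroup.closure_range_of _) g
  have h2 : g ∈ Submonoid.closure (S ∪ S⁻¹) := by
    rw [← Subgroup.closure_toSubmonoid]; exact h1
  have key : ∀ y ∈ L, g * y ∈ L := by
    refine Submonoid.closure_induction
      (motive := fun x _ => ∀ y ∈ L, x * y ∈ L) ?_ ?_ ?_ h2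
    · rintro x (⟨i, rfl⟩ | hx)
      · fin_cases i
        · exact step_a
        · exact step_b
      · rw [Set.mem_inv] at hx
        obtain ⟨i, hi⟩ := hx
        have hxi : x = (PresentedGroup.of i)⁻¹ := by
          rw [hi]; exact (inv_inv x).symm
        subst hxi
        fin_cases i
        · intro y hy
          show a⁻¹ * y ∈ L
          rw [ha_inv, mul_assoc]
          exact step_a _ (step_a y hy)
        · intro y hy
          show b⁻¹ * y ∈ L
          rw [hb_inv, mul_assoc]
          exact step_b _ (step_b y hy)
    · intro y hy; simpa using hy
    · intro x z _ _ hx hz y hy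
      rw [mul_assoc]
      exact hx _ (hz y hy)
  simpa using key 1 one_mem_L

/- The homomorphism to SL(2, ZMod 3). -/

abbrev SL := Matrix.SpecialLinearGroup (Fin 2) (ZMod 3)

instance : DecidableEq SL :=
  inferInstanceAs (DecidableEq {A : Matrix (Fin 2) (Fin 2) (ZMod 3) // A.det = 1})

def MA : SL := ⟨!![1, 1; 0, 1], by decide⟩
def MB : SL := ⟨!![1, 0; 2, 1], by decide⟩

lemma hrel : ∀ r ∈ truncatedBraid3Rels 3,
    FreeGroup.lift (![MA, MB] : Fin 2 → SL) r = 1 := by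
  intro r hr
  rcases hr with rfl | rfl | rfl <;>
    simp only [map_mul, map_inv, map_pow, FreeGroup.lift_apply_of, Matrix.cons_val_zero,
      Matrix.cons_val_one, Matrix.head_cons] <;>
    decide

noncomputable def φ : TruncatedBraid3 3 →* SL := PresentedGroup.toGroup hrel

lemma φa : φ a = MA := by
  show PresentedGroup.toGroup hrel (PresentedGroup.of 0) = MA
  simp

lemma φb : φ b = MB := by
  show PresentedGroup.toGroup hrel (PresentedGroup.of 1) = MB
  simp

def M : List SL :=
  [1, MA, MB, MA * MA, MB * MA, MA * MB, MB * MB, MB * (MA * MA), MA * (MB * MA),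
   MB * (MB * MA), MA * (MA * MB), MA * (MB * MB), MA * (MB * (MA * MA)), MB * (MB * (MA * MA)),
   MA * (MA * (MB * MA)), MA * (MB * (MB * MA)), MB * (MA * (MA * MB)), MA * (MA * (MB * MB)),
   MA * (MA * (MB * (MA * MA))), MA * (MB * (MB * (MA * MA))), MA * (MB * (MA * (MA * MB))),
   MA * (MA * (MB * (MB * MA))), MA * (MA * (MB * (MA * (MA * MB)))),
   MA * (MA * (MB * (MB * (MA * MA))))]

lemma himg : L.map φ = M := by
  simp only [L, M, List.map_cons, List.map_nil, map_one, map_mul, φa, φb]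

lemma hM_nodup : M.Nodup := by decide

lemma hL_nodup : L.Nodup := by
  have := himg ▸ hM_nodup
  exact List.Nodup.of_map φ this

end TB3Aux

/-- The truncated braid group `B₃(3)` has order 24. -/
theorem truncatedBraid3_card_3 : Nat.card (TruncatedBraid3 3) = 24 := by
  have hbij : Function.Bijective (TB3Aux.L.get) := by
    constructor
    · exact List.nodup_iff_injective_get.mp TB3Aux.hL_nodup
    · intro g
      obtain ⟨i, hi⟩ := List.get_of_mem (TB3Aux.cover g)
      exact ⟨i, hi⟩
  calc Nat.card (TruncatedBraid3 3) = Nat.card (Fin TB3Aux.L.length) :=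
        (Nat.card_eq_of_bijective _ hbij).symm
    _ = 24 := by simp [TB3Aux.L]
end

section
/- The truncated braid group B_3(4) = ⟨σ₁, σ₂ | σ₁σ₂σ₁ = σ₂σ₁σ₂, σ₁⁴ = σ₂⁴ = 1⟩ has order 96. -/
namespace TB3

abbrev B := Fin 2
abbrev G := GL (Fin 2) (ZMod 5)

instance : DecidableEq G := fun x y => decidable_of_iff _ Units.ext_iff.symm

def a : G := ⟨!![3,1;0,1], !![2,3;0,1], by decide, by decide⟩
def b : G := ⟨!![1,0;2,3], !![1,0;1,2], by decide, by decide⟩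

def gen : B → G := ![a, b]

def eval (l : List B) : G := (l.map gen).prod

abbrev rels : Set (FreeGroup B) := truncatedBraid3Rels 4
abbrev P := PresentedGroup rels

def wd (l : List B) : P := (l.map (fun i => (PresentedGroup.of i : P))).prod

def π : FreeGroup B →* P := PresentedGroup.mk rels

lemma rel_mem {r : FreeGroup B} (hr : r ∈ rels) : π r = 1 :=
  (QuotientGroup.eq_one_iff _).mpr (Subgroup.subset_normalClosure hr)

lemma pi_of (i : B) : π (FreeGroup.of i) = (PresentedGroup.of i : P) := rfl

lemma wd_append (x y : List B) : wd (x ++ y) = wd x * wd y := by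
  simp [wd, List.map_append, List.prod_append]

lemma wd_single (i : B) : wd [i] = (PresentedGroup.of i : P) := by
  simp [wd]

lemma braid : wd [0,1,0] = wd [1,0,1] := by
  have h := rel_mem (r := FreeGroup.of 0 * FreeGroup.of 1 * FreeGroup.of 0 *
      (FreeGroup.of 1 * FreeGroup.of 0 * FreeGroup.of 1)⁻¹) (Set.mem_insert _ _)
  rw [map_mul, map_inv, mul_inv_eq_one] at h
  simp only [map_mul, pi_of] at h
  simp [wd, mul_assoc] at h ⊢
  exact h

lemma sig_pow (i : B) : (PresentedGroup.of i : P) ^ 4 = 1 := by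
  fin_cases i
  · have h := rel_mem (r := FreeGroup.of 0 ^ 4)
      (Set.mem_insert_of_mem _ (Set.mem_insert _ _))
    rwa [map_pow, pi_of] at h
  · have h := rel_mem (r := FreeGroup.of 1 ^ 4)
      (Set.mem_insert_of_mem _ (Set.mem_insert_of_mem _ rfl))
    rwa [map_pow, pi_of] at h

lemma pow0 : wd [0,0,0,0] = wd [] := by
  have h := sig_pow 0
  simp [wd, mul_assoc, ← pow_succ'] at h ⊢
  simpa [pow_succ, mul_assoc] using h

lemma pow1 : wd [1,1,1,1] = wd [] := by
  have h := sig_pow 1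
  simp [wd, mul_assoc, ← pow_succ'] at h ⊢
  simpa [pow_succ, mul_assoc] using h

def rulesS : List (List B × List B) :=
  [([0,1,0],[1,0,1]), ([1,0,1],[0,1,0]), ([0,0,0,0],[]), ([],[0,0,0,0]),
   ([1,1,1,1],[]), ([],[1,1,1,1])]

lemma rule_sound : ∀ r ∈ rulesS, wd r.1 = wd r.2 := by
  intro r hr
  fin_cases hr
  · exact braid
  · exact braid.symm
  · exact pow0
  · exact pow0.symm
  · exact pow1
  · exact pow1.symm

def stepAt (u v : List B) (k : Nat) (r : List B × List B) : Bool :=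
  (u == u.take k ++ r.1 ++ u.drop (k + r.1.length)) &&
  (v == u.take k ++ r.2 ++ u.drop (k + r.1.length))

def oneStep (u v : List B) : Bool :=
  (List.range (u.length + 1)).any fun k => rulesS.any fun r => stepAt u v k r

lemma stepAt_sound {u v : List B} {k : Nat} {r : List B × List B}
    (hr : r ∈ rulesS) (h : stepAt u v k r = true) : wd u = wd v := by
  unfold stepAt at h
  rw [Bool.and_eq_true, beq_iff_eq, beq_iff_eq] at h
  obtain ⟨hu, hv⟩ := h
  calc wd u = wd (u.take k ++ r.1 ++ u.drop (k + r.1.length)) := by conv_lhs => rw [hu]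
    _ = wd (u.take k) * wd r.1 * wd (u.drop (k + r.1.length)) := by
        rw [wd_append, wd_append]
    _ = wd (u.take k) * wd r.2 * wd (u.drop (k + r.1.length)) := by
        rw [rule_sound r hr]
    _ = wd (u.take k ++ r.2 ++ u.drop (k + r.1.length)) := by rw [wd_append, wd_append]
    _ = wd v := by rw [← hv]

lemma oneStep_sound {u v : List B} (h : oneStep u v = true) : wd u = wd v := by
  unfold oneStep at h
  rw [List.any_eq_true] at h
  obtain ⟨k, -, h⟩ := h
  rw [List.any_eq_true] at h
  obtain ⟨r, hr, hs⟩ := h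
  exact stepAt_sound hr hs

def chainOk : List (List B) → Bool
  | u :: v :: rest => oneStep u v && chainOk (v :: rest)
  | _ => true

lemma chain_sound : ∀ c : List (List B), chainOk c = true →
    ∀ u v, c.head? = some u → c.getLast? = some v → wd u = wd v := by
  intro c
  induction c with
  | nil => intro _ u v h; simp at h
  | cons x rest ih =>
    intro hok u v hu hv
    cases rest with
    | nil =>
      simp at hu hv
      rw [← hu, ← hv]
    | cons y rest' =>
      simp only [List.head?_cons, Option.some_inj] at hu
      unfold chainOk at hok
      rw [Bool.and_eq_true] at hok
      have h1 : wd x = wd y := oneStep_sound hok.1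
      have h2 := ih hok.2 y v rfl (by rw [← hv, List.getLast?_cons_cons])
      rw [← hu, h1, h2]
set_option maxHeartbeats 2000000 in
def tbl : List (List B × List (List B) × List (List B)) := [
  ([], [[0]], [[1]]),
  ([0], [[0,0]], [[0,1]]),
  ([1], [[1,0]], [[1,1]]),
  ([0,0], [[0,0,0]], [[0,0,1]]),
  ([0,1], [[0,1,0]], [[0,1,1]]),
  ([1,0], [[1,0,0]], [[0,1,0],[1,0,1]]),
  ([1,1], [[1,1,0]], [[1,1,1]]),
  ([0,0,0], [[],[0,0,0,0]], [[0,0,0,1]]),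
  ([0,0,1], [[0,0,1,0]], [[0,0,1,1]]),
  ([0,1,0], [[0,1,0,0]], [[0,0,1,0],[0,1,0,1]]),
  ([0,1,1], [[0,1,1,0]], [[0,1,1,1]]),
  ([1,0,0], [[1,0,0,0]], [[1,0,0,1]]),
  ([1,1,0], [[1,1,0,0]], [[0,1,0,0],[1,0,1,0],[1,1,0,1]]),
  ([1,1,1], [[1,1,1,0]], [[],[1,1,1,1]]),
  ([0,0,0,1], [[0,0,0,1,0]], [[0,0,0,1,1]]),
  ([0,0,1,0], [[0,0,1,0,0]], [[0,0,0,1,0],[0,0,1,0,1]]),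
  ([0,0,1,1], [[0,0,1,1,0]], [[0,0,1,1,1]]),
  ([0,1,0,0], [[0,1,0,0,0]], [[0,1,0,0,1]]),
  ([0,1,1,0], [[0,1,1,0,0]], [[0,0,1,0,0],[0,1,0,1,0],[0,1,1,0,1]]),
  ([0,1,1,1], [[0,1,1,1,0]], [[0],[0,1,1,1,1]]),
  ([1,0,0,0], [[1],[1,0,0,0,0]], [[1,0,0,0,1]]),
  ([1,0,0,1], [[0,1,0,0,1],[1,0,1,0,1],[1,0,0,1,0]], [[1,0,0,1,1]]),
  ([1,1,0,0], [[1,1,0,0,0]], [[1,1,0,0,1]]),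
  ([1,1,1,0], [[1,1,1,0,0]], [[0,1,0,0,0],[1,0,1,0,0],[1,1,0,1,0],[1,1,1,0,1]]),
  ([0,0,0,1,0], [[0,0,0,1,0,0]], [[1,0],[0,0,0,0,1,0],[0,0,0,1,0,1]]),
  ([0,0,0,1,1], [[0,0,0,1,1,0]], [[0,0,0,1,1,1]]),
  ([0,0,1,0,0], [[0,0,1,0,0,0]], [[0,0,1,0,0,1]]),
  ([0,0,1,1,0], [[0,0,1,1,0,0]], [[0,0,0,1,0,0],[0,0,1,0,1,0],[0,0,1,1,0,1]]),
  ([0,0,1,1,1], [[0,0,1,1,1,0]], [[0,0],[0,0,1,1,1,1]]),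
  ([0,1,0,0,0], [[0,1],[0,1,0,0,0,0]], [[0,1,0,0,0,1]]),
  ([0,1,0,0,1], [[0,0,1,0,0,1],[0,1,0,1,0,1],[0,1,0,0,1,0]], [[0,1,0,0,1,1]]),
  ([0,1,1,0,0], [[0,1,1,0,0,0]], [[0,1,1,0,0,1]]),
  ([0,1,1,1,0], [[0,1,1,1,0,0]], [[0,0,1,0,0,0],[0,1,1,1,1,0,1,0,0,0],[0,1,1,1,0,1,0,0,0,0],[0,1,1,1,0,1]]),
  ([1,0,0,0,1], [[0,1,0,0,1,1],[1,0,1,0,1,1],[1,0,0,1,0,1],[1,0,0,0,1,0]], [[1,0,0,0,1,1]]),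
  ([1,0,0,1,1], [[1,0,0,1,1,0]], [[0,0,0,1,1,0],[0,0,0,1,1,0,1,1,1,1],[0,0,0,1,0,1,0,1,1,1],[0,0,0,0,1,0,0,1,1,1],[1,0,0,1,1,1]]),
  ([1,1,0,0,0], [[1,1],[1,1,0,0,0,0]], [[1,1,0,0,0,1]]),
  ([1,1,0,0,1], [[0,1,0,0,0,1],[1,0,1,0,0,1],[1,1,0,1,0,1],[1,1,0,0,1,0]], [[1,1,0,0,1,1]]),
  ([1,1,1,0,0], [[1,1,1,0,0,0]], [[0,1,1,0,0,0],[1,1,1,1,0,1,1,0,0,0],[1,1,1,0,1,0,1,0,0,0],[1,1,1,0,0,1,0,0,0,0],[1,1,1,0,0,1]]),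
  ([0,0,0,1,0,0], [[0,0,0,1,0,0,0]], [[0,0,0,1,0,0,1]]),
  ([0,0,0,1,1,0], [[0,0,0,1,1,0,0]], [[1,0,0],[0,0,0,0,1,0,0],[0,0,0,1,0,1,0],[0,0,0,1,1,0,1]]),
  ([0,0,0,1,1,1], [[0,0,0,1,1,1,0]], [[0,0,0],[0,0,0,1,1,1,1]]),
  ([0,0,1,0,0,0], [[0,0,1],[0,0,1,0,0,0,0]], [[0,0,1,0,0,0,1]]),
  ([0,0,1,0,0,1], [[0,0,0,1,0,0,1],[0,0,1,0,1,0,1],[0,0,1,0,0,1,0]], [[0,0,1,0,0,1,1]]),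
  ([0,0,1,1,0,0], [[0,0,1,1,0,0,0]], [[0,0,1,1,0,0,1]]),
  ([0,0,1,1,1,0], [[0,0,1,1,1,0,0]], [[0,0,0,1,0,0,0],[0,0,1,1,1,1,0,1,0,0,0],[0,0,1,1,1,0,1,0,0,0,0],[0,0,1,1,1,0,1]]),
  ([0,1,0,0,0,1], [[0,0,1,0,0,1,1],[0,1,0,1,0,1,1],[0,1,0,0,1,0,1],[0,1,0,0,0,1,0]], [[0,1,0,0,0,1,1]]),
  ([0,1,0,0,1,1], [[0,1,0,0,1,1,0]], [[1,1,0],[1,1,0,1,1,1,1],[1,0,1,0,1,1,1],[0,1,0,0,1,1,1]]),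
  ([0,1,1,0,0,0], [[0,1,1],[0,1,1,0,0,0,0]], [[0,1,1,0,0,0,1]]),
  ([0,1,1,0,0,1], [[0,0,1,0,0,0,1],[0,1,0,1,0,0,1],[0,1,1,0,1,0,1],[0,1,1,0,0,1,0]], [[0,1,1,0,0,1,1]]),
  ([0,1,1,1,0,0], [[0,1,1,1,0,0,0]], [[0,0,1,1,0,0,0],[0,1,1,1,1,0,1,1,0,0,0],[0,1,1,1,0,1,0,1,0,0,0],[0,1,1,1,0,0,1,0,0,0,0],[0,1,1,1,0,0,1]]),
  ([1,0,0,0,1,1], [[1,0,0,0,1,1,0]], [[0,0,0,1,1,1,0],[0,0,0,1,1,1,0,1,1,1,1],[0,0,0,1,1,0,1,0,1,1,1],[0,0,0,1,0,1,0,0,1,1,1],[0,0,0,0,1,0,0,0,1,1,1],[1,0,0,0,1,1,1]]),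
  ([1,0,0,1,1,0], [[0,0,1,1,0,0,1],[0,0,1,1,0,1,1,1,1,0,1],[0,0,1,0,1,0,1,1,1,0,1],[0,0,0,1,0,0,1,1,1,0,1],[0,0,0,1,0,0,1,1,0,1,0],[0,0,0,1,0,0,1,0,1,0,0],[0,0,0,1,0,1,0,1,1,0,0],[0,0,0,0,1,0,0,1,1,0,0],[1,0,0,1,1,0,0]], [[0,1,0,0,1,1,0],[1,0,1,0,1,1,0],[1,0,0,1,0,1,0],[1,0,0,1,1,0,1]]),
  ([1,1,0,0,0,1], [[0,1,0,0,0,1,1],[1,0,1,0,0,1,1],[1,1,0,1,0,1,1],[1,1,0,0,1,0,1],[1,1,0,0,0,1,0]], [[1,1,0,0,0,1,1]]),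
  ([1,1,0,0,1,1], [[0,1,1,0,0,1,1],[0,1,0,0,0,0,1,0,0,1,1],[1,0,1,0,0,0,1,0,0,1,1],[1,1,0,1,0,0,1,0,0,1,1],[1,1,0,1,0,1,0,1,0,1,1],[1,1,0,1,0,1,0,0,1,0,1],[1,1,0,1,0,1,0,0,0,1,0],[1,1,0,0,1,0,0,0,0,1,0],[1,1,0,0,1,1,0]], [[1,0,0,0,1,1,0],[1,0,0,0,1,1,0,1,1,1,1],[1,0,0,0,1,0,1,0,1,1,1],[1,0,0,0,0,1,0,0,1,1,1],[1,1,0,0,1,1,1]]),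
  ([1,1,1,0,0,0], [[1,1,1],[1,1,1,0,0,0,0]], [[0,1,1,1,0,0,0],[1,1,1,1,0,1,1,1,0,0,0],[1,1,1,0,1,0,1,1,0,0,0],[1,1,1,0,0,1,0,1,0,0,0],[1,1,1,0,0,0,1,0,0,0,0],[1,1,1,0,0,0,1]]),
  ([0,0,0,1,0,0,0], [[0,0,0,1],[0,0,0,1,0,0,0,0]], [[0,0,0,1,0,0,0,1]]),
  ([0,0,0,1,0,0,1], [[1,0,0,1],[0,0,0,0,1,0,0,1],[0,0,0,1,0,1,0,1],[0,0,0,1,0,0,1,0]], [[0,0,0,1,0,0,1,1]]),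
  ([0,0,0,1,1,0,0], [[0,0,0,1,1,0,0,0]], [[0,0,0,1,1,0,0,1]]),
  ([0,0,0,1,1,1,0], [[0,0,0,1,1,1,0,0]], [[1,0,0,0],[0,0,0,0,1,0,0,0],[0,0,0,1,0,1,0,0],[0,0,0,1,1,0,1,0],[0,0,0,1,1,1,0,1]]),
  ([0,0,1,0,0,0,1], [[0,0,0,1,0,0,1,1],[0,0,1,0,1,0,1,1],[0,0,1,0,0,1,0,1],[0,0,1,0,0,0,1,0]], [[0,0,1,0,0,0,1,1]]),
  ([0,0,1,0,0,1,1], [[0,0,1,0,0,1,1,0]], [[0,1,1,0],[0,1,1,0,1,1,1,1],[0,1,0,1,0,1,1,1],[0,0,1,0,0,1,1,1]]),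
  ([0,0,1,1,0,0,0], [[0,0,1,1],[0,0,1,1,0,0,0,0]], [[0,0,1,1,0,0,0,1]]),
  ([0,0,1,1,0,0,1], [[0,0,0,1,0,0,0,1],[0,0,1,0,1,0,0,1],[0,0,1,1,0,1,0,1],[0,0,1,1,0,0,1,0]], [[0,0,1,1,0,0,1,1]]),
  ([0,0,1,1,1,0,0], [[0,0,1,1,1,0,0,0]], [[0,0,0,1,1,0,0,0],[0,0,1,1,1,1,0,1,1,0,0,0],[0,0,1,1,1,0,1,0,1,0,0,0],[0,0,1,1,1,0,0,1,0,0,0,0],[0,0,1,1,1,0,0,1]]),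
  ([0,1,0,0,0,1,1], [[0,1,0,0,0,1,1,0]], [[1,1,1,0],[1,1,1,0,1,1,1,1],[1,1,1,0,1,0,0,0,0,1,1,1],[1,1,1,1,0,1,0,0,0,1,1,1],[0,1,0,0,0,1,1,1]]),
  ([0,1,0,0,1,1,0], [[0,0,0,1,1,0,0,1],[0,0,0,1,1,0,1,1,1,1,0,1],[0,0,0,1,1,0,1,1,1,0,1,0],[0,0,0,1,0,1,0,1,1,0,1,0],[0,0,1,0,1,1,0,1,1,0,1,0],[0,1,0,1,1,1,0,1,1,0,1,0],[0,1,0,1,1,1,0,1,0,1,0,0],[0,1,0,1,1,1,1,0,1,1,0,0],[0,1,0,0,1,1,0,0]], [[0,0,1,0,0,1,1,0],[0,1,0,1,0,1,1,0],[0,1,0,0,1,0,1,0],[0,1,0,0,1,1,0,1]]),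
  ([0,1,1,0,0,0,1], [[0,0,1,0,0,0,1,1],[0,1,0,1,0,0,1,1],[0,1,1,0,1,0,1,1],[0,1,1,0,0,1,0,1],[0,1,1,0,0,0,1,0]], [[0,1,1,0,0,0,1,1]]),
  ([0,1,1,0,0,1,1], [[0,0,1,1,0,0,1,1],[0,0,1,0,0,0,0,1,0,0,1,1],[0,1,0,1,0,0,0,1,0,0,1,1],[0,1,0,1,0,0,1,0,1,0,1,1],[0,1,1,0,1,0,1,0,1,0,1,1],[0,1,1,0,1,0,1,1,0,1,1,1],[0,1,1,0,0,1,0,1,0,1,1,1],[0,1,1,0,0,1,1,0,1,1,1,1],[0,1,1,0,0,1,1,0]], [[0,1,0,0,0,1,1,0],[0,1,0,0,0,1,1,0,1,1,1,1],[0,1,0,0,0,1,0,1,0,1,1,1],[0,1,0,0,0,0,1,0,0,1,1,1],[0,1,1,0,0,1,1,1]]),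
  ([0,1,1,1,0,0,0], [[0,1,1,1],[0,1,1,1,0,0,0,0]], [[0,0,1,1,1,0,0,0],[0,1,1,1,1,0,1,1,1,0,0,0],[0,1,1,1,0,0,0,0,1,0,1,1,1,0,0,0],[0,1,1,1,0,0,0,1,0,1,1,1,1,0,0,0],[0,1,1,1,0,0,0,1,0,0,0,0],[0,1,1,1,0,0,0,1]]),
  ([1,0,0,0,1,1,0], [[1,0,0,0,1,1,0,0]], [[1,1,0,0],[1,0,0,0,0,1,0,0],[1,0,0,0,1,0,1,0],[1,0,0,0,1,1,0,1]]),
  ([1,1,0,0,0,1,1], [[0,1,1,0,0,0,1,1],[1,1,1,1,0,1,1,0,0,0,1,1],[1,1,1,0,1,0,1,0,0,0,1,1],[1,1,1,0,0,1,0,0,0,0,1,1],[1,1,1,0,0,1,1,1],[1,1,0,0,0,0,1,0,0,1,1,1],[1,1,0,0,0,1,0,1,0,1,1,1],[1,1,0,0,0,1,1,0,1,1,1,1],[1,1,0,0,0,1,1,0]], [[0,0,0,1,1,1,0,0],[0,0,0,1,1,1,0,0,1,1,1,1],[0,0,0,1,1,1,0,0,1,0,0,0,0,1,1,1],[0,0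,0,1,1,1,0,1,0,1,0,0,0,1,1,1],[0,0,0,1,1,1,1,0,1,1,0,0,0,1,1,1],[0,0,0,0,1,1,0,0,0,1,1,1],[1,1,0,0,0,1,1,1]]),
  ([0,0,0,1,0,0,0,1], [[1,0,0,1,1],[0,0,0,0,1,0,0,1,1],[0,0,0,1,0,1,0,1,1],[0,0,0,1,0,0,1,0,1],[0,0,0,1,0,0,0,1,0]], [[0,0,0,1,0,0,0,1,1]]),
  ([0,0,0,1,0,0,1,1], [[0,0,0,1,0,0,1,1,0]], [[0,0,1,1,0],[0,0,1,1,0,1,1,1,1],[0,0,1,0,1,0,1,1,1],[0,0,0,1,0,0,1,1,1]]),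
  ([0,0,0,1,1,0,0,0], [[0,0,0,1,1],[0,0,0,1,1,0,0,0,0]], [[0,0,0,1,1,0,0,0,1]]),
  ([0,0,0,1,1,0,0,1], [[1,0,0,0,1],[0,0,0,0,1,0,0,0,1],[0,0,0,1,0,1,0,0,1],[0,0,0,1,1,0,1,0,1],[0,0,0,1,1,0,0,1,0]], [[0,0,0,1,1,0,0,1,1]]),
  ([0,0,0,1,1,1,0,0], [[0,0,0,1,1,1,0,0,0]], [[1,1,0,0,0],[0,0,0,0,1,1,0,0,0],[0,0,0,1,1,1,1,0,1,1,0,0,0],[0,0,0,1,1,1,0,1,0,1,0,0,0],[0,0,0,1,1,1,0,0,1,0,0,0,0],[0,0,0,1,1,1,0,0,1]]),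
  ([0,0,1,0,0,0,1,1], [[0,0,1,0,0,0,1,1,0]], [[0,1,1,1,0],[0,1,1,1,0,1,1,1,1],[0,1,1,1,0,1,0,0,0,0,1,1,1],[0,1,1,1,1,0,1,0,0,0,1,1,1],[0,0,1,0,0,0,1,1,1]]),
  ([0,0,1,0,0,1,1,0], [[1,1,0,0,1],[1,1,0,0,1,0,0,0,0],[1,1,0,1,0,1,0,0,0],[1,1,0,1,1,0,1,0,0],[1,0,1,0,1,0,1,0,0],[0,1,0,0,1,0,1,0,0],[0,1,0,1,0,1,1,0,0],[0,0,1,0,0,1,1,0,0]], [[0,0,0,1,0,0,1,1,0],[0,0,1,0,1,0,1,1,0],[0,0,1,0,0,1,0,1,0],[0,0,1,0,0,1,1,0,1]]),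
  ([0,0,1,1,0,0,0,1], [[0,0,0,1,0,0,0,1,1],[0,0,1,0,1,0,0,1,1],[0,0,1,1,0,1,0,1,1],[0,0,1,1,0,0,1,0,1],[0,0,1,1,0,0,0,1,0]], [[0,0,1,1,0,0,0,1,1]]),
  ([0,0,1,1,0,0,1,1], [[0,0,0,1,1,0,0,1,1],[0,0,0,1,0,0,0,0,1,0,0,1,1],[0,0,0,1,0,0,0,1,0,1,0,1,1],[0,0,0,1,0,0,0,1,0,0,1,0,1],[0,0,1,0,1,0,0,1,0,0,1,0,1],[0,0,1,0,1,0,0,1,0,0,0,1,0],[0,0,1,1,0,1,0,1,0,0,0,1,0],[0,0,1,1,0,0,1,0,0,0,0,1,0],[0,0,1,1,0,0,1,1,0]], [[0,0,1,0,0,0,1,1,0],[0,0,1,0,0,0,1,1,0,1,1,1,1],[0,0,1,0,0,0,1,0,1,0,1,1,1],[0,0,1,0,0,0,0,1,0,0,1,1,1],[0,0,1,1,0,0,1,1,1]]),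
  ([0,0,1,1,1,0,0,0], [[0,0,1,1,1],[0,0,1,1,1,0,0,0,0]], [[0,0,0,1,1,1,0,0,0],[0,0,1,1,1,1,0,1,1,1,0,0,0],[0,0,1,1,1,0,0,0,0,1,0,1,1,1,0,0,0],[0,0,1,1,1,0,0,0,1,0,1,1,1,1,0,0,0],[0,0,1,1,1,0,0,0,1,0,0,0,0],[0,0,1,1,1,0,0,0,1]]),
  ([0,1,0,0,0,1,1,0], [[0,1,0,0,0,1,1,0,0]], [[0,1,1,0,0],[0,1,0,0,0,0,1,0,0],[0,1,0,0,0,1,0,1,0],[0,1,0,0,0,1,1,0,1]]),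
  ([0,1,1,0,0,0,1,1], [[0,0,1,1,0,0,0,1,1],[0,1,1,1,1,0,1,1,0,0,0,1,1],[0,1,1,1,0,1,0,1,0,0,0,1,1],[0,1,1,0,0,0,0,1,0,1,0,1,0,0,0,1,1],[0,1,1,0,0,0,0,1,0,0,1,0,0,0,0,1,1],[0,1,1,0,0,0,0,1,0,0,1,1,1],[0,1,1,0,0,0,1,0,1,0,1,1,1],[0,1,1,0,0,0,1,1,0,1,1,1,1],[0,1,1,0,0,0,1,1,0]], [[1,1,1,0,0],[1,1,1,0,0,1,1,1,1],[1,1,1,0,0,1,0,0,0,0,1,1,1],[1,1,1,0,1,0,1,0,0,0,1,1,1],[1,1,1,1,0,1,1,0,0,0,1,1,1],[0,1,1,0,0,0,1,1,1]]),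
  ([1,0,0,0,1,1,0,0], [[0,0,0,1,1,0,0,0,1],[0,0,0,1,1,0,0,0,1,0,0,0,0],[0,0,0,1,1,0,0,1,0,1,0,0,0],[0,0,0,1,1,0,1,0,1,1,0,0,0],[0,0,0,1,0,1,0,0,1,1,0,0,0],[0,0,0,0,1,0,0,0,1,1,0,0,0],[1,0,0,0,1,1,0,0,0]], [[0,1,0,0,0,1,1,0,0],[0,1,0,0,1,1,1,1,0,1,1,0,0],[0,1,0,0,1,1,1,0,1,0,1,0,0],[0,1,0,0,1,1,1,0,0,1,0,0,0],[1,0,1,0,1,1,1,0,0,1,0,0,0],[1,0,0,1,0,1,1,0,0,1,0,0,0],[1,0,0,0,1,0,1,0,0,1,0,0,0],[1,0,0,0,1,1,0,1,0,1,0,0,0],[1,0,0,0,1,1,0,0,1,0,0,0,0],[1,0,0,0,1,1,0,0,1]]),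
  ([0,0,0,1,0,0,0,1,1], [[0,0,0,1,0,0,0,1,1,0]], [[0,0,1,1,1,0],[0,0,1,1,1,0,1,1,1,1],[0,0,1,1,1,0,1,0,0,0,0,1,1,1],[0,0,1,1,1,1,0,1,0,0,0,1,1,1],[0,0,0,1,0,0,0,1,1,1]]),
  ([0,0,0,1,0,0,1,1,0], [[0,1,1,0,0,1],[0,1,1,0,1,1,1,1,0,1],[0,1,1,0,1,1,1,0,1,0],[0,1,0,1,0,1,1,0,1,0],[0,1,0,1,0,1,0,1,0,0],[0,1,0,1,1,0,1,1,0,0],[0,0,1,0,1,0,1,1,0,0],[0,0,0,1,0,0,1,1,0,0]], [[1,0,0,1,1,0],[0,0,0,0,1,0,0,1,1,0],[0,0,0,1,0,1,0,1,1,0],[0,0,0,1,0,0,1,0,1,0],[0,0,0,1,0,0,1,1,0,1]]),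
  ([0,0,0,1,1,0,0,0,1], [[1,0,0,0,1,1],[0,0,0,0,1,0,0,0,1,1],[0,0,0,1,0,1,0,0,1,1],[0,0,0,1,1,0,1,0,1,1],[0,0,0,1,1,0,0,1,0,1],[0,0,0,1,1,0,0,0,1,0]], [[0,0,0,1,1,0,0,0,1,1]]),
  ([0,0,0,1,1,0,0,1,1], [[1,1,0,0,1,1],[1,0,0,0,0,1,0,0,1,1],[0,0,0,0,1,0,0,0,0,1,0,0,1,1],[0,0,0,1,0,1,0,0,0,1,0,0,1,1],[0,0,0,1,0,1,0,0,1,0,1,0,1,1],[0,0,0,1,1,0,1,0,1,0,1,0,1,1],[0,0,0,1,1,0,1,0,1,0,0,1,0,1],[0,0,0,1,1,0,0,1,0,0,0,1,0,1],[0,0,0,1,1,0,0,1,0,0,0,0,1,0],[0,0,0,1,1,0,0,1,1,0]], [[0,0,0,1,0,0,0,1,1,0],[0,0,0,1,0,0,0,1,1,0,1,1,1,1],[0,0,0,1,0,0,0,1,0,1,0,1,1,1],[0,0,0,1,0,0,0,0,1,0,0,1,1,1],[0,0,0,1,1,0,0,1,1,1]]),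
  ([0,0,0,1,1,1,0,0,0], [[0,0,0,1,1,1],[0,0,0,1,1,1,0,0,0,0]], [[1,1,1,0,0,0],[0,0,0,0,1,1,1,0,0,0],[0,0,0,1,1,1,1,0,1,1,1,0,0,0],[0,0,0,1,1,1,0,1,0,1,1,0,0,0],[0,0,0,1,1,1,0,0,1,0,1,0,0,0],[0,0,0,1,1,1,0,0,0,1,0,0,0,0],[0,0,0,1,1,1,0,0,0,1]]),
  ([0,0,1,0,0,0,1,1,0], [[0,0,1,0,0,0,1,1,0,0]], [[0,0,1,1,0,0],[0,0,1,0,0,0,0,1,0,0],[0,0,1,0,0,0,1,0,1,0],[0,0,1,0,0,0,1,1,0,1]]),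
  ([0,0,1,1,0,0,0,1,1], [[0,0,0,1,1,0,0,0,1,1],[0,0,1,1,1,1,0,1,1,0,0,0,1,1],[0,0,1,1,1,0,1,0,1,0,0,0,1,1],[0,0,1,1,1,0,0,1,0,0,0,0,1,1],[0,0,1,1,1,0,0,1,1,1],[0,0,1,1,0,0,0,0,1,0,0,1,1,1],[0,0,1,1,0,0,0,1,0,1,0,1,1,1],[0,0,1,1,0,0,0,1,1,0,1,1,1,1],[0,0,1,1,0,0,0,1,1,0]], [[0,1,1,1,0,0],[0,1,1,1,0,0,1,1,1,1],[0,1,1,1,0,0,1,0,0,0,0,1,1,1],[0,1,1,1,0,1,0,1,0,0,0,1,1,1],[0,1,1,1,1,0,1,1,0,0,0,1,1,1],[0,0,1,1,0,0,0,1,1,1]]),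
  ([0,1,0,0,0,1,1,0,0], [[1,1,0,0,0,1],[1,1,0,0,0,1,0,0,0,0],[1,1,0,0,1,0,1,0,0,0],[1,1,0,1,0,1,1,0,0,0],[1,0,1,0,0,1,1,0,0,0],[0,1,0,0,0,1,1,0,0,0]], [[0,0,1,0,0,0,1,1,0,0],[0,0,1,0,0,1,1,1,1,0,1,1,0,0],[0,0,1,0,0,1,1,1,0,1,0,1,0,0],[0,0,1,0,0,1,1,1,0,0,1,0,0,0],[0,1,0,1,0,1,1,1,0,0,1,0,0,0],[0,1,0,0,1,0,1,1,0,0,1,0,0,0],[0,1,0,0,0,1,0,1,0,0,1,0,0,0],[0,1,0,0,0,1,1,0,1,0,1,0,0,0],[0,1,0,0,0,1,1,0,0,1,0,0,0,0],[0,1,0,0,0,1,1,0,0,1]]),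
  ([0,0,0,1,0,0,0,1,1,0], [[0,0,0,1,0,0,0,1,1,0,0]], [[0,0,0,1,1,0,0],[0,0,0,1,0,0,0,0,1,0,0],[0,0,0,1,0,0,0,1,0,1,0],[0,0,0,1,0,0,0,1,1,0,1]]),
  ([0,0,0,1,1,0,0,0,1,1], [[1,1,0,0,0,1,1],[0,0,0,0,1,1,0,0,0,1,1],[0,0,0,1,1,1,1,0,1,1,0,0,0,1,1],[0,0,0,1,1,1,0,1,0,1,0,0,0,1,1],[0,0,0,1,1,1,0,0,1,0,0,0,0,1,1],[0,0,0,1,1,1,0,0,1,1,1],[0,0,0,1,1,0,0,0,0,1,0,0,1,1,1],[0,0,0,1,1,0,0,0,1,0,1,0,1,1,1],[0,0,0,1,1,0,0,0,1,1,0,1,1,1,1],[0,0,0,1,1,0,0,0,1,1,0]], [[0,0,1,1,1,0,0],[0,0,1,1,1,0,0,1,1,1,1],[0,0,1,1,1,0,0,1,0,0,0,0,1,1,1],[0,0,1,1,1,0,1,0,1,0,0,0,1,1,1],[0,0,1,1,1,1,0,1,1,0,0,0,1,1,1],[0,0,0,1,1,0,0,0,1,1,1]]),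
  ([0,0,1,0,0,0,1,1,0,0], [[0,1,1,0,0,0,1],[0,1,1,0,0,0,1,0,0,0,0],[0,1,1,0,0,1,0,1,0,0,0],[0,1,1,0,1,0,1,1,0,0,0],[0,1,0,1,0,0,1,1,0,0,0],[0,0,1,0,0,0,1,1,0,0,0]], [[0,0,0,1,0,0,0,1,1,0,0],[0,0,0,1,0,0,1,1,1,1,0,1,1,0,0],[0,0,0,1,0,0,1,1,1,0,1,0,1,0,0],[0,0,1,0,1,0,1,1,1,0,1,0,1,0,0],[0,0,1,0,0,1,0,1,1,0,1,0,1,0,0],[0,0,1,0,0,1,0,1,1,0,0,1,0,0,0],[0,0,1,0,0,0,1,0,1,0,0,1,0,0,0],[0,0,1,0,0,0,1,1,0,1,0,1,0,0,0],[0,0,1,0,0,0,1,1,0,0,1,0,0,0,0],[0,0,1,0,0,0,1,1,0,0,1]]),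
  ([0,0,0,1,0,0,0,1,1,0,0], [[0,0,1,1,0,0,0,1],[0,0,1,1,0,0,0,1,0,0,0,0],[0,0,1,1,0,0,1,0,1,0,0,0],[0,0,1,1,0,1,0,1,1,0,0,0],[0,0,1,0,1,0,0,1,1,0,0,0],[0,0,0,1,0,0,0,1,1,0,0,0]], [[1,0,0,0,1,1,0,0],[1,0,0,1,1,1,1,0,1,1,0,0],[1,0,0,1,1,1,0,1,0,1,0,0],[0,0,0,0,1,0,0,1,1,1,0,1,0,1,0,0],[0,0,0,0,1,0,0,1,1,1,0,0,1,0,0,0],[0,0,0,1,0,1,0,1,1,1,0,0,1,0,0,0],[0,0,0,1,0,0,1,0,1,1,0,0,1,0,0,0],[0,0,0,1,0,0,0,1,0,1,0,0,1,0,0,0],[0,0,0,1,0,0,0,1,1,0,1,0,1,0,0,0],[0,0,0,1,0,0,0,1,1,0,0,1,0,0,0,0],[0,0,0,1,0,0,0,1,1,0,0,1]])]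

def W : List (List B) := tbl.map Prod.fst

def rowOk (w : List B) (c : List (List B)) (i : B) : Bool :=
  chainOk c &&
  match c.head? with
  | some nw => decide (nw ∈ W) && decide (eval nw = eval w * gen i) &&
      (c.getLast? == some (w ++ [i]))
  | none => false

set_option maxHeartbeats 16000000 in
set_option maxRecDepth 100000 in
lemma MD1 : ∀ row ∈ tbl, rowOk row.1 row.2.1 0 = true ∧ rowOk row.1 row.2.2 1 = true := by
  decide

set_option maxHeartbeats 4000000 in
set_option maxRecDepth 100000 in
lemma MD2 : (W.map eval).Nodup := by decide

set_option maxHeartbeats 4000000 in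
set_option maxRecDepth 100000 in
lemma MD3 : [] ∈ W := by decide

set_option maxRecDepth 100000 in
lemma MD4 : W.length = 96 := by decide

lemma rowOk_sound {w : List B} {c : List (List B)} {i : B} (h : rowOk w c i = true) :
    ∃ nw, nw ∈ W ∧ eval nw = eval w * gen i ∧ wd nw = wd w * wd [i] := by
  unfold rowOk at h
  rw [Bool.and_eq_true] at h
  obtain ⟨hchain, h2⟩ := h
  cases hh : c.head? with
  | none => rw [hh] at h2; simp at h2
  | some nw =>
    rw [hh] at h2
    rw [Bool.and_eq_true, Bool.and_eq_true] at h2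
    obtain ⟨⟨hmem, heval⟩, hlast⟩ := h2
    rw [decide_eq_true_eq] at hmem heval
    rw [beq_iff_eq] at hlast
    have hwd := chain_sound c hchain nw (w ++ [i]) hh hlast
    exact ⟨nw, hmem, heval, by rw [hwd, wd_append]⟩

lemma h_rels : ∀ r ∈ rels, FreeGroup.lift gen r = 1 := by
  intro r hr
  simp only [rels, truncatedBraid3Rels, Set.mem_insert_iff, Set.mem_singleton_iff] at hr
  rcases hr with rfl | rfl | rfl <;>
    · simp only [map_mul, map_inv, map_pow, FreeGroup.lift_apply_of]
      decide

def φ : P →* G := PresentedGroup.toGroup h_rels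

lemma φ_of (i : B) : φ (PresentedGroup.of i) = gen i := PresentedGroup.toGroup.of h_rels

lemma φ_wd (l : List B) : φ (wd l) = eval l := by
  induction l with
  | nil => simp [wd, eval]
  | cons i t ih =>
    simp only [wd, eval, List.map_cons, List.prod_cons] at ih ⊢
    rw [map_mul, φ_of, ih]

def Inv (p : P) : Prop := ∃ w, w ∈ W ∧ eval w = φ p ∧ wd w = p

lemma inv_one : Inv 1 := ⟨[], MD3, by simp [eval], rfl⟩

lemma inv_step {p : P} (h : Inv p) (i : B) : Inv (p * PresentedGroup.of i) := by
  obtain ⟨w, hw, he, hd⟩ := h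
  obtain ⟨row, hrow, hw1⟩ := List.mem_map.mp (show w ∈ tbl.map Prod.fst from hw)
  have hok := MD1 row hrow
  have hrowOk : rowOk w (if i = 0 then row.2.1 else row.2.2) i = true := by
    fin_cases i
    · simpa [hw1] using hok.1
    · simpa [hw1] using hok.2
  obtain ⟨nw, hnw, heval, hwd⟩ := rowOk_sound hrowOk
  refine ⟨nw, hnw, ?_, ?_⟩
  · rw [heval, he, map_mul, φ_of]
  · rw [hwd, hd, wd_single]

lemma inv_all (p : P) : Inv p := by
  obtain ⟨u, rfl⟩ := PresentedGroup.mk_surjective rels p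
  suffices H : ∀ u : FreeGroup B, ∀ q : P, Inv q → Inv (q * π u) by
    have := H u 1 inv_one
    rwa [one_mul] at this
  clear u
  intro u
  induction u using FreeGroup.induction_on with
  | C1 => intro q h; rwa [map_one, mul_one]
  | of i => intro q h; exact inv_step h i
  | inv_of i _ =>
    intro q h
    have h4 := sig_pow i
    have hinv : (PresentedGroup.of i : P)⁻¹ = (PresentedGroup.of i) ^ 3 := by
      rw [← mul_one ((PresentedGroup.of i : P)⁻¹), ← h4]
      group
    have key : q * π ((FreeGroup.of i)⁻¹) =
        ((q * PresentedGroup.of i) * PresentedGroup.of i) * PresentedGroup.of i := by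
      rw [map_inv]
      show q * (PresentedGroup.of i : P)⁻¹ = _
      rw [hinv, pow_succ, pow_succ, pow_one, ← mul_assoc, ← mul_assoc]
    rw [key]
    exact inv_step (inv_step (inv_step h i) i) i
  | mul x y ihx ihy =>
    intro q h
    rw [map_mul, ← mul_assoc]
    exact ihy _ (ihx _ h)

lemma φ_inj : Function.Injective φ := by
  intro p q h
  obtain ⟨w1, hw1, he1, hd1⟩ := inv_all p
  obtain ⟨w2, hw2, he2, hd2⟩ := inv_all q
  have : w1 = w2 :=
    List.inj_on_of_nodup_map MD2 hw1 hw2 (by rw [he1, he2, h])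
  rw [← hd1, ← hd2, this]

instance : Finite P := Finite.of_injective φ φ_inj

lemma main : Nat.card P = 96 := by
  have hle : Nat.card P ≤ 96 := by
    have hf : Function.Injective (fun p : P =>
        (⟨φ p, by
          obtain ⟨w, hw, he, _⟩ := inv_all p
          rw [List.mem_toFinset, ← he]
          exact List.mem_map_of_mem hw⟩ : {g // g ∈ (W.map eval).toFinset})) :=
      fun p q h => φ_inj (congrArg Subtype.val h)
    have := Nat.card_le_card_of_injective _ hf
    rwa [Nat.card_eq_finsetCard, List.toFinset_card_of_nodup MD2,
      List.length_map, MD4] at this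
  have hge : 96 ≤ Nat.card P := by
    have hnd : W.Nodup := MD2.of_map eval
    have hg : Function.Injective (fun w : {w // w ∈ W.toFinset} => wd w.1) := by
      intro w1 w2 h
      have h2 : eval w1.1 = eval w2.1 := by
        rw [← φ_wd, ← φ_wd]
        exact congrArg φ h
      exact Subtype.ext (List.inj_on_of_nodup_map MD2
        (List.mem_toFinset.mp w1.2) (List.mem_toFinset.mp w2.2) h2)
    have := Nat.card_le_card_of_injective _ hg
    rwa [Nat.card_eq_finsetCard, List.toFinset_card_of_nodup hnd, MD4] at this
  exact le_antisymm hle hge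

end TB3

/-- The truncated braid group `B₃(4)` has order 96. -/
theorem truncatedBraid3_card_4 : Nat.card (TruncatedBraid3 4) = 96 := TB3.main
end

section
/- The map (a,b) ↦ [a³ : b²] from S³ ⊂ ℂ² to ℂP¹ is well-defined, continuous, and surjective, and its fibers are exactly the orbits of the S¹-action ζ·(a,b) = (ζ²a, ζ³b); hence it induces a homeomorphism S³/S¹ ≅ ℂP¹. -/
open scoped LinearAlgebra.Projectivization
open Topology

noncomputable instance : TopologicalSpace (ℙ ℂ (ℂ × ℂ)) :=
  inferInstanceAs (TopologicalSpace (Quotient (projectivizationSetoid ℂ (ℂ × ℂ))))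

/-- The unit 3-sphere in `ℂ²`. -/
def Sphere3 : Set (ℂ × ℂ) := {p | ‖p.1‖ ^ 2 + ‖p.2‖ ^ 2 = 1}

/-- Two points of `S³` lie in the same orbit of the circle action
`ζ·(a,b) = (ζ²a, ζ³b)`. -/
def SameOrbit (p q : Sphere3) : Prop :=
  ∃ ζ : ℂ, ‖ζ‖ = 1 ∧ (q : ℂ × ℂ) = (ζ ^ 2 * (p : ℂ × ℂ).1, ζ ^ 3 * (p : ℂ × ℂ).2)

namespace SphereProjAux

lemma real_pow_eq_one {r : ℝ} (h0 : 0 ≤ r) {n : ℕ} (hn : n ≠ 0) (h : r ^ n = 1) : r = 1 := by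
  rcases lt_trichotomy r 1 with hlt | heq | hgt
  · have := pow_lt_one₀ h0 hlt hn; rw [h] at this; exact absurd this (lt_irrefl 1)
  · exact heq
  · have := one_lt_pow₀ hgt hn; rw [h] at this; exact absurd this (lt_irrefl 1)

lemma exists_unit_sum (A B : ℝ) (hA0 : 0 ≤ A) (hB0 : 0 ≤ B) (hAB : 0 < A ∨ 0 < B) :
    ∃ t : ℝ, 0 < t ∧ A * t ^ 4 + B * t ^ 6 = 1 := by
  obtain ⟨t0, ht01, hget0⟩ : ∃ t0 : ℝ, 1 ≤ t0 ∧ 1 ≤ A * t0 ^ 4 + B * t0 ^ 6 := by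
    rcases hAB with hA | hB
    · have ht01 : (1:ℝ) ≤ 1 + 1 / A := le_add_of_nonneg_right (by positivity)
      have h1 : A * (1 + 1 / A) = A + 1 := by field_simp
      have h2 : 1 ≤ A * (1 + 1 / A) := by rw [h1]; linarith
      refine ⟨1 + 1 / A, ht01, ?_⟩
      have hcube : 1 ≤ (1 + 1 / A) ^ 3 := one_le_pow₀ ht01
      have h3 : 0 ≤ (1 + 1 / A) ^ 4 - (1 + 1 / A) := by
        nlinarith [mul_le_mul_of_nonneg_left hcube (show (0:ℝ) ≤ 1 + 1 / A by linarith)]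
      nlinarith [mul_nonneg hA.le h3,
        mul_nonneg hB0 (pow_nonneg (by linarith : (0:ℝ) ≤ 1 + 1 / A) 6)]
    · have ht01 : (1:ℝ) ≤ 1 + 1 / B := le_add_of_nonneg_right (by positivity)
      have h1 : B * (1 + 1 / B) = B + 1 := by field_simp
      have h2 : 1 ≤ B * (1 + 1 / B) := by rw [h1]; linarith
      refine ⟨1 + 1 / B, ht01, ?_⟩
      have hcube : 1 ≤ (1 + 1 / B) ^ 5 := one_le_pow₀ ht01
      have h3 : 0 ≤ (1 + 1 / B) ^ 6 - (1 + 1 / B) := by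
        nlinarith [mul_le_mul_of_nonneg_left hcube (show (0:ℝ) ≤ 1 + 1 / B by linarith)]
      nlinarith [mul_nonneg hB.le h3,
        mul_nonneg hA0 (pow_nonneg (by linarith : (0:ℝ) ≤ 1 + 1 / B) 4)]
  have hcont : Continuous fun t : ℝ => A * t ^ 4 + B * t ^ 6 := by fun_prop
  have h0t0 : (0:ℝ) ≤ t0 := by linarith
  have hmem : (1:ℝ) ∈ (fun t : ℝ => A * t ^ 4 + B * t ^ 6) '' Set.Icc 0 t0 :=
    intermediate_value_Icc h0t0 hcont.continuousOn ⟨by norm_num, hget0⟩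
  obtain ⟨t, htmem, ht⟩ := hmem
  refine ⟨t, ?_, ht⟩
  rcases eq_or_lt_of_le htmem.1 with h | h
  · exfalso; rw [← h] at ht; norm_num at ht
  · exact h

/-- cross-product criterion -/
lemma mk_eq_mk_iff_cross (v w : ℂ × ℂ) (hv : v ≠ 0) (hw : w ≠ 0) :
    Projectivization.mk ℂ v hv = Projectivization.mk ℂ w hw ↔ v.1 * w.2 = v.2 * w.1 := by
  rw [Projectivization.mk_eq_mk_iff' ℂ v w hv hw]
  constructor
  · rintro ⟨a, ha⟩
    rw [Prod.ext_iff] at ha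
    simp only [Prod.smul_fst, Prod.smul_snd, smul_eq_mul] at ha
    rw [← ha.1, ← ha.2]; ring
  · intro h
    by_cases hw1 : w.1 = 0
    · have hw2 : w.2 ≠ 0 := by
        intro hw2; exact hw (Prod.ext hw1 hw2)
      have hv1 : v.1 = 0 := by
        have := h; rw [hw1, mul_zero] at this
        exact (mul_eq_zero.mp this).resolve_right hw2
      refine ⟨v.2 / w.2, ?_⟩
      apply Prod.ext <;> simp [hw1, hv1, div_mul_cancel₀, hw2]
    · refine ⟨v.1 / w.1, ?_⟩
      apply Prod.ext
      · simp [div_mul_cancel₀, hw1]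
      · simp only [Prod.smul_snd, smul_eq_mul]
        field_simp
        linear_combination h

/-- scaling map on nonzero vectors -/
def sm (c : ℂˣ) (x : {v : ℂ × ℂ // v ≠ 0}) : {v : ℂ × ℂ // v ≠ 0} :=
  ⟨(c : ℂ) • (x : ℂ × ℂ), by simp [smul_ne_zero_iff, x.2]⟩

lemma continuous_sm (c : ℂˣ) : Continuous (sm c) :=
  (continuous_subtype_val.const_smul (c : ℂ)).subtype_mk _

lemma isOpenQuotientMap_mk' :
    IsOpenQuotientMap (Projectivization.mk' ℂ : {v : ℂ × ℂ // v ≠ 0} → ℙ ℂ (ℂ × ℂ)) := by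
  refine ⟨Quotient.mk''_surjective, continuous_quotient_mk', ?_⟩
  intro U hU
  have hq : IsQuotientMap (Projectivization.mk' ℂ : {v : ℂ × ℂ // v ≠ 0} → ℙ ℂ (ℂ × ℂ)) :=
    isQuotientMap_quotient_mk'
  rw [← hq.isOpen_preimage]
  have : (Projectivization.mk' ℂ) ⁻¹' ((Projectivization.mk' ℂ) '' U) = ⋃ c : ℂˣ, sm c ⁻¹' U := by
    ext x
    simp only [Set.mem_preimage, Set.mem_image, Set.mem_iUnion]
    constructor
    · rintro ⟨u, hu, heq⟩
      obtain ⟨c, hc⟩ := (Projectivization.mk_eq_mk_iff ℂ _ _ u.2 x.2).mp (by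
        simpa [Projectivization.mk'_eq_mk] using heq)
      refine ⟨c, ?_⟩
      have : sm c x = u := Subtype.ext hc
      rwa [this]
    · rintro ⟨c, hc⟩
      refine ⟨sm c x, hc, ?_⟩
      simp only [Projectivization.mk'_eq_mk]
      rw [Projectivization.mk_eq_mk_iff]
      exact ⟨c, by simp [sm, Units.smul_def]⟩
  rw [this]
  exact isOpen_iUnion fun c => (continuous_sm c).isOpen_preimage U hU

instance instT2 : T2Space (ℙ ℂ (ℂ × ℂ)) := by
  rw [t2_iff_isClosed_diagonal]
  have hq := isOpenQuotientMap_mk'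
  rw [← ((hq.prodMap hq).isQuotientMap).isClosed_preimage]
  have : Prod.map (Projectivization.mk' ℂ) (Projectivization.mk' ℂ) ⁻¹'
      (Set.diagonal (ℙ ℂ (ℂ × ℂ))) =
      {x : {v : ℂ × ℂ // v ≠ 0} × {v : ℂ × ℂ // v ≠ 0} |
        (x.1 : ℂ × ℂ).1 * (x.2 : ℂ × ℂ).2 = (x.1 : ℂ × ℂ).2 * (x.2 : ℂ × ℂ).1} := by
    ext x
    simp only [Set.mem_preimage, Set.mem_diagonal_iff, Prod.map_apply, Set.mem_setOf_eq,
      Projectivization.mk'_eq_mk]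
    exact mk_eq_mk_iff_cross _ _ x.1.2 x.2.2
  rw [this]
  apply isClosed_eq <;> fun_prop

lemma sphere3_vec_ne (p : Sphere3) :
    ((p : ℂ × ℂ).1 ^ 3, (p : ℂ × ℂ).2 ^ 2) ≠ (0 : ℂ × ℂ) := by
  have hp := p.2
  simp only [Sphere3, Set.mem_setOf_eq] at hp
  intro h
  rw [Prod.ext_iff] at h
  have h1 : (p : ℂ × ℂ).1 = 0 := by
    have := h.1; simpa using pow_eq_zero_iff (n := 3) (by norm_num) |>.mp this
  have h2 : (p : ℂ × ℂ).2 = 0 := by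
    have := h.2; simpa using pow_eq_zero_iff (n := 2) (by norm_num) |>.mp this
  rw [h1, h2] at hp; simp at hp

/-- the Hopf-like map -/
noncomputable def hopf (p : Sphere3) : ℙ ℂ (ℂ × ℂ) :=
  Projectivization.mk ℂ ((p : ℂ × ℂ).1 ^ 3, (p : ℂ × ℂ).2 ^ 2) (sphere3_vec_ne p)

lemma continuous_hopf : Continuous hopf := by
  have : hopf = (Projectivization.mk' ℂ) ∘
      (fun p : Sphere3 =>
        (⟨((p : ℂ × ℂ).1 ^ 3, (p : ℂ × ℂ).2 ^ 2), sphere3_vec_ne p⟩ :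
          {v : ℂ × ℂ // v ≠ 0})) := rfl
  rw [this]
  exact continuous_quotient_mk'.comp (Continuous.subtype_mk (by fun_prop) _)

lemma hopf_surjective : Function.Surjective hopf := by
  intro z
  induction z using Projectivization.ind with
  | h w hw =>
    obtain ⟨a0, ha0⟩ := IsAlgClosed.exists_pow_nat_eq w.1 (n := 3) (by norm_num)
    obtain ⟨b0, hb0⟩ := IsAlgClosed.exists_pow_nat_eq w.2 (n := 2) (by norm_num)
    set A := ‖a0‖ ^ 2 with hA_def
    set B := ‖b0‖ ^ 2 with hB_def
    have hA0 : 0 ≤ A := by positivity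
    have hB0 : 0 ≤ B := by positivity
    have hAB : 0 < A ∨ 0 < B := by
      by_contra hcon
      push_neg at hcon
      have ha0' : a0 = 0 := by
        have : ‖a0‖ = 0 := by nlinarith [norm_nonneg a0, hcon.1]
        simpa using this
      have hb0' : b0 = 0 := by
        have : ‖b0‖ = 0 := by nlinarith [norm_nonneg b0, hcon.2]
        simpa using this
      apply hw
      have h1 : w.1 = 0 := by rw [← ha0, ha0']; ring
      have h2 : w.2 = 0 := by rw [← hb0, hb0']; ring
      exact Prod.ext h1 h2
    obtain ⟨t, ht0pos, ht⟩ := exists_unit_sum A B hA0 hB0 hAB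
    have ht0le : 0 ≤ t := ht0pos.le
    have htne : t ≠ 0 := ht0pos.ne'
    set p : ℂ × ℂ := ((t : ℂ) ^ 2 * a0, (t : ℂ) ^ 3 * b0) with hp_def
    have hmem : p ∈ Sphere3 := by
      simp only [Sphere3, Set.mem_setOf_eq, hp_def, norm_mul, norm_pow, Complex.norm_real, Real.norm_eq_abs,
        abs_of_nonneg ht0le]
      have := ht
      simp only [hA_def, hB_def] at this
      nlinarith [this]
    refine ⟨⟨p, hmem⟩, ?_⟩
    show Projectivization.mk ℂ _ _ = Projectivization.mk ℂ w hw
    rw [Projectivization.mk_eq_mk_iff' ℂ]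
    refine ⟨(t : ℂ) ^ 6, ?_⟩
    have htC : (t : ℂ) ≠ 0 := by exact_mod_cast htne
    apply Prod.ext
    · show (t : ℂ) ^ 6 * w.1 = ((t : ℂ) ^ 2 * a0) ^ 3
      rw [← ha0]; ring
    · show (t : ℂ) ^ 6 * w.2 = ((t : ℂ) ^ 3 * b0) ^ 2
      rw [← hb0]; ring

lemma hopf_eq_iff (p q : Sphere3) : hopf p = hopf q ↔ SameOrbit p q := by
  obtain ⟨⟨a, b⟩, hp⟩ := p
  obtain ⟨⟨a', b'⟩, hq⟩ := q
  simp only [Sphere3, Set.mem_setOf_eq] at hp hq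
  constructor
  · intro h
    obtain ⟨c, hc⟩ := (Projectivization.mk_eq_mk_iff' ℂ _ _ _ _).mp h.symm
    rw [Prod.ext_iff] at hc
    simp only [Prod.smul_fst, Prod.smul_snd, smul_eq_mul] at hc
    obtain ⟨hc1, hc2⟩ := hc
    -- hc1 : c * a ^ 3 = a' ^ 3, hc2 : c * b ^ 2 = b' ^ 2
    have hcne : c ≠ 0 := by
      rintro rfl
      simp only [zero_mul] at hc1 hc2
      have ha' : a' = 0 := by
        have := hc1.symm; simpa using pow_eq_zero_iff (n := 3) (by norm_num) |>.mp this
      have hb' : b' = 0 := by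
        have := hc2.symm; simpa using pow_eq_zero_iff (n := 2) (by norm_num) |>.mp this
      rw [ha', hb'] at hq; simp at hq
    by_cases ha : a = 0
    · have habsb : ‖b‖ = 1 := by
        rw [ha] at hp; simp only [norm_zero] at hp
        refine real_pow_eq_one (norm_nonneg b) (n := 2) (by norm_num) ?_
        nlinarith [hp]
      have hb : b ≠ 0 := by
        intro h0; rw [h0] at habsb; simp at habsb
      have ha' : a' = 0 := by
        have : a' ^ 3 = 0 := by rw [← hc1, ha]; ring
        simpa using pow_eq_zero_iff (n := 3) (by norm_num) |>.mp this
      have hb'ne : b' ≠ 0 := by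
        intro h0; rw [ha', h0] at hq; simp at hq
      have habsb' : ‖b'‖ = 1 := by
        rw [ha'] at hq; simp only [norm_zero] at hq
        refine real_pow_eq_one (norm_nonneg b') (n := 2) (by norm_num) ?_
        nlinarith [hq]
      obtain ⟨ζ, hζ⟩ := IsAlgClosed.exists_pow_nat_eq (b' / b) (n := 3) (by norm_num)
      have habsζ : ‖ζ‖ = 1 := by
        refine real_pow_eq_one (norm_nonneg ζ) (n := 3) (by norm_num) ?_
        rw [← norm_pow, hζ, norm_div, habsb, habsb']; norm_num
      refine ⟨ζ, habsζ, ?_⟩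
      simp only [Prod.ext_iff]
      constructor
      · show a' = ζ ^ 2 * a; rw [ha', ha]; ring
      · show b' = ζ ^ 3 * b; rw [hζ]; field_simp
    · by_cases hb : b = 0
      · have habsa : ‖a‖ = 1 := by
          rw [hb] at hp; simp only [norm_zero] at hp
          refine real_pow_eq_one (norm_nonneg a) (n := 2) (by norm_num) ?_
          nlinarith [hp]
        have hb' : b' = 0 := by
          have : b' ^ 2 = 0 := by rw [← hc2, hb]; ring
          simpa using pow_eq_zero_iff (n := 2) (by norm_num) |>.mp this
        have ha'ne : a' ≠ 0 := by
          intro h0; rw [h0, hb'] at hq; simp at hq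
        have habsa' : ‖a'‖ = 1 := by
          rw [hb'] at hq; simp only [norm_zero] at hq
          refine real_pow_eq_one (norm_nonneg a') (n := 2) (by norm_num) ?_
          nlinarith [hq]
        obtain ⟨ζ, hζ⟩ := IsAlgClosed.exists_pow_nat_eq (a' / a) (n := 2) (by norm_num)
        have habsζ : ‖ζ‖ = 1 := by
          refine real_pow_eq_one (norm_nonneg ζ) (n := 2) (by norm_num) ?_
          rw [← norm_pow, hζ, norm_div, habsa, habsa']; norm_num
        refine ⟨ζ, habsζ, ?_⟩
        simp only [Prod.ext_iff]
        constructor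
        · show a' = ζ ^ 2 * a; rw [hζ]; field_simp
        · show b' = ζ ^ 3 * b; rw [hb', hb]; ring
      · -- general case
        have ha'ne : a' ≠ 0 := by
          intro h0
          rw [h0] at hc1
          have : c * a ^ 3 = 0 := by rw [hc1]; ring
          rcases mul_eq_zero.mp this with h | h
          · exact hcne h
          · exact ha (by simpa using pow_eq_zero_iff (n := 3) (by norm_num) |>.mp h)
        have hb'ne : b' ≠ 0 := by
          intro h0
          rw [h0] at hc2
          have : c * b ^ 2 = 0 := by rw [hc2]; ring
          rcases mul_eq_zero.mp this with h | h
          · exact hcne h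
          · exact hb (by simpa using pow_eq_zero_iff (n := 2) (by norm_num) |>.mp h)
        set u := a' / a with hu_def
        set v := b' / b with hv_def
        have hu3 : u ^ 3 = c := by
          rw [hu_def]; field_simp; linear_combination -hc1
        have hv2 : v ^ 2 = c := by
          rw [hv_def]; field_simp; linear_combination -hc2
        have huv : u ^ 3 = v ^ 2 := by rw [hu3, hv2]
        set r := ‖u‖ with hr_def
        have hr0 : 0 ≤ r := norm_nonneg u
        have hvabs : ‖v‖ ^ 2 = r ^ 3 := by
          have := congrArg norm huv
          simpa [norm_pow] using this.symm
        have haabs : ‖a‖ ≠ 0 := by simpa using ha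
        have hbabs : ‖b‖ ≠ 0 := by simpa using hb
        have habsa' : ‖a'‖ = r * ‖a‖ := by
          rw [hr_def, hu_def, norm_div, div_mul_cancel₀ _ haabs]
        have habsb'2 : ‖b'‖ ^ 2 = r ^ 3 * ‖b‖ ^ 2 := by
          have hb'v : ‖b'‖ = ‖v‖ * ‖b‖ := by
            rw [hv_def, norm_div, div_mul_cancel₀ _ hbabs]
          rw [hb'v, mul_pow, hvabs]
        have hApos : 0 < ‖a‖ ^ 2 := by
          have := haabs; positivity
        have hBpos : 0 < ‖b‖ ^ 2 := by
          have := hbabs; positivity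
        have key : r ^ 2 * ‖a‖ ^ 2 + r ^ 3 * ‖b‖ ^ 2 = 1 := by
          have h1 : ‖a'‖ ^ 2 = r ^ 2 * ‖a‖ ^ 2 := by
            rw [habsa']; ring
          linarith [hq, h1, habsb'2]
        have hr1 : r = 1 := by
          have hfac : (r - 1) * (‖a‖ ^ 2 * (r + 1) +
              ‖b‖ ^ 2 * (r ^ 2 + r + 1)) = 0 := by
            linear_combination key - hp
          rcases mul_eq_zero.mp hfac with h | h
          · linarith
          · exfalso
            nlinarith [hApos, hBpos, hr0]
        have huabs : ‖u‖ = 1 := hr1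
        have hvabs1 : ‖v‖ = 1 := by
          refine real_pow_eq_one (norm_nonneg v) (n := 2) (by norm_num) ?_
          rw [hvabs, hr1]; ring
        have hune : u ≠ 0 := by
          intro h0; rw [h0] at huabs; simp at huabs
        have hvne : v ≠ 0 := by
          intro h0; rw [h0] at hvabs1; simp at hvabs1
        refine ⟨v / u, by rw [norm_div, huabs, hvabs1]; norm_num, ?_⟩
        simp only [Prod.ext_iff]
        constructor
        · show a' = (v / u) ^ 2 * a
          have h1 : (v / u) ^ 2 = u := by
            field_simp; linear_combination -huv
          rw [h1, hu_def]; field_simp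
        · show b' = (v / u) ^ 3 * b
          have h1 : (v / u) ^ 3 = v := by
            rw [div_pow, huv, pow_succ, mul_div_cancel_left₀ _ (pow_ne_zero 2 hvne)]
          rw [h1, hv_def]; field_simp
  · rintro ⟨ζ, hζ, hq_eq⟩
    rw [Prod.ext_iff] at hq_eq
    obtain ⟨h1, h2⟩ := hq_eq
    have h1' : a' = ζ ^ 2 * a := h1
    have h2' : b' = ζ ^ 3 * b := h2
    have hζ0 : ζ ≠ 0 := by
      intro h0; rw [h0] at hζ; simp at hζ
    show Projectivization.mk ℂ _ _ = Projectivization.mk ℂ _ _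
    rw [Projectivization.mk_eq_mk_iff' ℂ]
    refine ⟨(ζ ^ 6)⁻¹, ?_⟩
    apply Prod.ext
    · show (ζ ^ 6)⁻¹ * a' ^ 3 = a ^ 3
      rw [h1']; field_simp
    · show (ζ ^ 6)⁻¹ * b' ^ 2 = b ^ 2
      rw [h2']; field_simp

instance : CompactSpace Sphere3 := by
  rw [← isCompact_iff_compactSpace]
  apply Metric.isCompact_of_isClosed_isBounded
  · have : Sphere3 = (fun p : ℂ × ℂ => ‖p.1‖ ^ 2 + ‖p.2‖ ^ 2) ⁻¹' {1} := by
      ext p; simp [Sphere3]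
    rw [this]
    exact IsClosed.preimage
      (((continuous_norm.comp continuous_fst).pow 2).add
        ((continuous_norm.comp continuous_snd).pow 2)) isClosed_singleton
  · rw [Metric.isBounded_iff_subset_closedBall 0]
    refine ⟨1, fun p hp => ?_⟩
    simp only [Sphere3, Set.mem_setOf_eq] at hp
    simp only [Metric.mem_closedBall, dist_zero_right]
    rw [Prod.norm_def]
    have h1 : ‖p.1‖ ≤ 1 := by
      nlinarith [norm_nonneg p.1, norm_nonneg p.2]
    have h2 : ‖p.2‖ ≤ 1 := by
      nlinarith [norm_nonneg p.1, norm_nonneg p.2]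
    exact max_le h1 h2

end SphereProjAux

open SphereProjAux in
/-- The map `(a,b) ↦ [a³ : b²]` from `S³` to `ℂP¹` is well defined, continuous
and surjective, its fibers are exactly the orbits of the circle action
`ζ·(a,b) = (ζ²a, ζ³b)`, and it induces a homeomorphism `S³/S¹ ≅ ℂP¹`. -/
theorem sphere_to_projective_line :
    ∃ f : Sphere3 → ℙ ℂ (ℂ × ℂ),
      (∀ (p : Sphere3) (h : ((p : ℂ × ℂ).1 ^ 3, (p : ℂ × ℂ).2 ^ 2) ≠ (0 : ℂ × ℂ)),
        f p = Projectivization.mk ℂ ((p : ℂ × ℂ).1 ^ 3, (p : ℂ × ℂ).2 ^ 2) h) ∧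
      Continuous f ∧ Function.Surjective f ∧
      (∀ p q : Sphere3, f p = f q ↔ SameOrbit p q) ∧
      ∃ e : Quot SameOrbit ≃ₜ ℙ ℂ (ℂ × ℂ), ∀ p : Sphere3, e (Quot.mk _ p) = f p := by
  refine ⟨hopf, fun p h => rfl, continuous_hopf, hopf_surjective,
    fun p q => hopf_eq_iff p q, ?_⟩
  have hsound : ∀ p q : Sphere3, SameOrbit p q → hopf p = hopf q :=
    fun p q h => (hopf_eq_iff p q).mpr h
  let F : Quot SameOrbit → ℙ ℂ (ℂ × ℂ) := Quot.lift hopf hsound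
  have hFcont : Continuous F := continuous_quot_lift hsound continuous_hopf
  have hFbij : Function.Bijective F := by
    constructor
    · intro x y
      obtain ⟨p, rfl⟩ := Quot.exists_rep x
      obtain ⟨q, rfl⟩ := Quot.exists_rep y
      intro h
      exact Quot.sound ((hopf_eq_iff p q).mp h)
    · intro z
      obtain ⟨p, hp⟩ := hopf_surjective z
      exact ⟨Quot.mk _ p, hp⟩
  let E : Quot SameOrbit ≃ ℙ ℂ (ℂ × ℂ) := Equiv.ofBijective F hFbij
  have hEcont : Continuous E := hFcont
  exact ⟨Continuous.homeoOfEquivCompactToT2 hEcont, fun p => rfl⟩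
end
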